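/- With potentials q_j = j/(2(m+1)) for j = 0,…,m, the walk profiles can be exactly recovered by the inverse discrete Fourier transform: Φ(m,k) = (1/(m+1)) Σ_{j=0}^{m} e^{-i4πq_j k} e^{i2πq_j m} A_{q_j}^m for every 0 ≤ k ≤ m. -/

import Mathlib

open Matrix Complex Finset

/-- Magnetic matrix `A_q = e^{i2πq} A + e^{-i2πq} Aᵀ` of a real matrix `A`. -/
noncomputable def magn {n : ℕ} (A : Matrix (Fin n) (Fin n) ℝ) (q : ℝ) :
    Matrix (Fin n) (Fin n) ℂ :=
  Complex.exp ((2 * Real.pi * q : ℝ) * Complex.I) • A.map (Complex.ofReal) +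
    Complex.exp ((-(2 * Real.pi * q) : ℝ) * Complex.I) • Aᵀ.map (Complex.ofReal)

/-- Walk profile `Φ(m,k)`. -/
noncomputable def walkProfile {n : ℕ} (A : Matrix (Fin n) (Fin n) ℝ) (m k : ℕ) :
    Matrix (Fin n) (Fin n) ℝ :=
  ∑ b ∈ Finset.univ.filter
      (fun b : Fin m → Bool => (Finset.univ.filter (fun j => b j = true)).card = k),
    (List.ofFn (fun j : Fin m => if b j then A else Aᵀ)).prod

lemma add_pow_boolsum {R : Type*} [Semiring R] (a b : R) :
    ∀ m : ℕ, (a + b) ^ m =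
      ∑ f : Fin m → Bool, (List.ofFn fun j => if f j then a else b).prod := by
  intro m
  induction m with
  | zero => simp
  | succ m ih =>
    rw [pow_succ', ih, ← Equiv.sum_comp (Fin.consEquiv fun _ : Fin (m+1) => Bool)
      (fun f : Fin (m+1) → Bool => (List.ofFn fun j => if f j then a else b).prod),
      Fintype.sum_prod_type]
    simp only [Fin.consEquiv, Equiv.coe_fn_mk, List.ofFn_succ, Fin.cons_zero, Fin.cons_succ,
      List.prod_cons]
    rw [Fintype.sum_bool]
    simp [← Finset.mul_sum, add_mul]

lemma listprod_smul {n : ℕ} :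
    ∀ (m : ℕ) (c : Fin m → ℂ) (M : Fin m → Matrix (Fin n) (Fin n) ℂ),
      (List.ofFn fun j => c j • M j).prod = (∏ j, c j) • (List.ofFn M).prod := by
  intro m
  induction m with
  | zero => simp
  | succ m ih =>
    intro c M
    rw [List.ofFn_succ, List.ofFn_succ, List.prod_cons, List.prod_cons,
      ih (fun j => c j.succ) (fun j => M j.succ), Fin.prod_univ_succ, smul_mul_smul_comm]

lemma magn_pow_expand {n : ℕ} (A : Matrix (Fin n) (Fin n) ℝ) (m : ℕ) (q : ℝ) :
    (magn A q) ^ m =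
      ∑ f : Fin m → Bool,
        (Complex.exp ((2 * Real.pi * q : ℝ) * Complex.I) ^
            (Finset.univ.filter (fun j => f j = true)).card *
          Complex.exp ((-(2 * Real.pi * q) : ℝ) * Complex.I) ^
            (m - (Finset.univ.filter (fun j => f j = true)).card)) •
        (List.ofFn fun j : Fin m =>
          if f j then A.map (Complex.ofReal) else Aᵀ.map (Complex.ofReal)).prod := by
  rw [magn, add_pow_boolsum]
  refine Finset.sum_congr rfl fun f _ => ?_
  have h1 : (List.ofFn fun j : Fin m => if f j then
        Complex.exp ((2 * Real.pi * q : ℝ) * Complex.I) • A.map (Complex.ofReal)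
      else Complex.exp ((-(2 * Real.pi * q) : ℝ) * Complex.I) • Aᵀ.map (Complex.ofReal)) =
      List.ofFn fun j : Fin m =>
        (if f j then Complex.exp ((2 * Real.pi * q : ℝ) * Complex.I)
          else Complex.exp ((-(2 * Real.pi * q) : ℝ) * Complex.I)) •
        (if f j then A.map (Complex.ofReal) else Aᵀ.map (Complex.ofReal)) := by
    congr 1; funext j; cases f j <;> simp
  rw [h1, listprod_smul]
  congr 1
  rw [Finset.prod_ite, Finset.prod_const, Finset.prod_const]
  congr 1
  have := Finset.card_filter_add_card_filter_not
    (s := (Finset.univ : Finset (Fin m))) (fun j => f j = true)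
  simp only [Finset.card_univ, Fintype.card_fin] at this
  congr 1
  omega

lemma dft_sum (m k t : ℕ) (hk : k ≤ m) (ht : t ≤ m) :
    ∑ j ∈ Finset.range (m + 1),
      Complex.exp ((j : ℂ) * (2 * Real.pi * ((t : ℂ) - k) / (m + 1) * Complex.I)) =
      if t = k then (m + 1 : ℂ) else 0 := by
  have hm1 : ((m : ℂ) + 1) ≠ 0 := by
    have : ((m + 1 : ℕ) : ℂ) ≠ 0 := Nat.cast_ne_zero.mpr (Nat.succ_ne_zero m)
    push_cast at this; exact this
  set w : ℂ := 2 * Real.pi * ((t : ℂ) - k) / (m + 1) * Complex.I with hw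
  have hz : ∀ j ∈ Finset.range (m+1), Complex.exp ((j:ℂ) * w) = Complex.exp w ^ j := by
    intro j _; exact Complex.exp_nat_mul w j
  rw [Finset.sum_congr rfl hz]
  by_cases htk : t = k
  · subst htk
    simp [hw]
  · rw [if_neg htk]
    have hmw : ((m:ℂ)+1) * w = ((t:ℂ) - k) * (2 * Real.pi * Complex.I) := by
      rw [hw]; field_simp
    have hzm : Complex.exp w ^ (m+1) = 1 := by
      rw [← Complex.exp_nat_mul, show ((m+1 : ℕ):ℂ) = (m:ℂ)+1 by push_cast; ring, hmw,
        show ((t:ℂ) - k) = (((t:ℤ) - (k:ℤ) : ℤ) : ℂ) by push_cast; ring]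
      exact Complex.exp_int_mul_two_pi_mul_I _
    have hz1 : Complex.exp w ≠ 1 := by
      intro h1
      rw [Complex.exp_eq_one_iff] at h1
      obtain ⟨N, hN⟩ := h1
      rw [hw] at hN
      field_simp at hN
      have hc : (2 * (Real.pi:ℂ) * Complex.I) ≠ 0 := by
        simp [Real.pi_ne_zero, Complex.I_ne_zero]
      have h2 : ((t:ℂ) - k) = N * ((m:ℂ)+1) := by
        apply mul_left_cancel₀ hc
        linear_combination (2 * (Real.pi:ℂ) * Complex.I) * hN
      have h3 : (t:ℤ) - k = N * ((m:ℤ)+1) := by exact_mod_cast h2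
      have ht' : (t:ℤ) ≤ m := by exact_mod_cast ht
      have hk' : (k:ℤ) ≤ m := by exact_mod_cast hk
      have htk' : (t:ℤ) ≠ k := by exact_mod_cast htk
      rcases lt_trichotomy N 0 with h | h | h
      · have hN1 : N ≤ -1 := by omega
        nlinarith
      · subst h; simp at h3; omega
      · have hN1 : 1 ≤ N := h
        nlinarith
    rw [geom_sum_eq hz1, hzm]
    simp

lemma scalar_id (m k t j : ℕ) (ht : t ≤ m) :
    Complex.exp ((-(4 * Real.pi * ((j : ℝ) / (2 * (m + 1))) * k) : ℝ) * Complex.I) *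
      Complex.exp ((2 * Real.pi * ((j : ℝ) / (2 * (m + 1))) * m : ℝ) * Complex.I) *
      (Complex.exp ((2 * Real.pi * ((j : ℝ) / (2 * (m + 1))) : ℝ) * Complex.I) ^ t *
        Complex.exp ((-(2 * Real.pi * ((j : ℝ) / (2 * (m + 1)))) : ℝ) * Complex.I) ^ (m - t)) =
      Complex.exp ((j : ℂ) * (2 * Real.pi * ((t : ℂ) - k) / (m + 1) * Complex.I)) := by
  have hm1 : ((m : ℂ) + 1) ≠ 0 := by
    have : ((m + 1 : ℕ) : ℂ) ≠ 0 := Nat.cast_ne_zero.mpr (Nat.succ_ne_zero m)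
    push_cast at this; exact this
  rw [← Complex.exp_nat_mul, ← Complex.exp_nat_mul, ← Complex.exp_add, ← Complex.exp_add,
    ← Complex.exp_add]
  congr 1
  push_cast [Nat.cast_sub ht]
  field_simp
  ring

theorem walkProfile_inverse_dft {n : ℕ} (A : Matrix (Fin n) (Fin n) ℝ) (m k : ℕ)
    (hk : k ≤ m) :
    (walkProfile A m k).map (Complex.ofReal) =
      ((m + 1 : ℂ))⁻¹ •
        ∑ j ∈ Finset.range (m + 1),
          (Complex.exp ((-(4 * Real.pi * ((j : ℝ) / (2 * (m + 1))) * k) : ℝ) * Complex.I) *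
            Complex.exp ((2 * Real.pi * ((j : ℝ) / (2 * (m + 1))) * m : ℝ) * Complex.I)) •
            (magn A ((j : ℝ) / (2 * (m + 1)))) ^ m := by
  have hm1 : ((m : ℂ) + 1) ≠ 0 := by
    have : ((m + 1 : ℕ) : ℂ) ≠ 0 := Nat.cast_ne_zero.mpr (Nat.succ_ne_zero m)
    push_cast at this; exact this
  set tf : (Fin m → Bool) → ℕ :=
    fun f => (Finset.univ.filter (fun j => f j = true)).card with htf
  set Mf : (Fin m → Bool) → Matrix (Fin n) (Fin n) ℂ :=
    fun f => (List.ofFn fun j : Fin m =>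
      if f j then A.map (Complex.ofReal) else Aᵀ.map (Complex.ofReal)).prod with hMf
  have htle : ∀ f : Fin m → Bool, tf f ≤ m := by
    intro f
    calc tf f ≤ (Finset.univ : Finset (Fin m)).card := Finset.card_filter_le _ _
    _ = m := by simp
  -- LHS
  have hL : (walkProfile A m k).map (Complex.ofReal) =
      ∑ f ∈ Finset.univ.filter (fun f : Fin m → Bool => tf f = k), Mf f := by
    rw [walkProfile,
      show ∀ M : Matrix (Fin n) (Fin n) ℝ, M.map (Complex.ofReal) =
        Complex.ofRealHom.mapMatrix M from fun M => rfl,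
      map_sum]
    refine Finset.sum_congr rfl fun f _ => ?_
    rw [map_list_prod, List.map_ofFn]
    refine congrArg _ (congrArg List.ofFn (funext fun j => ?_))
    simp only [Function.comp_apply]
    cases f j <;> rfl
  rw [hL]
  -- RHS
  have hR : ∑ j ∈ Finset.range (m + 1),
      (Complex.exp ((-(4 * Real.pi * ((j : ℝ) / (2 * (m + 1))) * k) : ℝ) * Complex.I) *
        Complex.exp ((2 * Real.pi * ((j : ℝ) / (2 * (m + 1))) * m : ℝ) * Complex.I)) •
        (magn A ((j : ℝ) / (2 * (m + 1)))) ^ m =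
      ∑ f : Fin m → Bool, (if tf f = k then ((m : ℂ) + 1) else 0) • Mf f := by
    have step1 : ∀ j ∈ Finset.range (m+1),
        (Complex.exp ((-(4 * Real.pi * ((j : ℝ) / (2 * (m + 1))) * k) : ℝ) * Complex.I) *
          Complex.exp ((2 * Real.pi * ((j : ℝ) / (2 * (m + 1))) * m : ℝ) * Complex.I)) •
          (magn A ((j : ℝ) / (2 * (m + 1)))) ^ m =
        ∑ f : Fin m → Bool,
          Complex.exp ((j : ℂ) * (2 * Real.pi * (((tf f) : ℂ) - k) / (m + 1) * Complex.I)) •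
            Mf f := by
      intro j _
      rw [magn_pow_expand, Finset.smul_sum]
      refine Finset.sum_congr rfl fun f _ => ?_
      rw [smul_smul]
      congr 1
      exact scalar_id m k (tf f) j (htle f)
    rw [Finset.sum_congr rfl step1, Finset.sum_comm]
    refine Finset.sum_congr rfl fun f _ => ?_
    rw [← Finset.sum_smul, dft_sum m k (tf f) hk (htle f)]
  rw [hR]
  simp only [ite_smul, zero_smul, ← Finset.sum_filter]
  rw [Finset.smul_sum]
  refine (Finset.sum_congr rfl fun f _ => ?_).symm
  rw [smul_smul, inv_mul_cancel₀ hm1, one_smul]
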